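/- Let α, β be nonzero real numbers with α ≠ β, let λ ≥ 1 and set t = (λ + 1/λ)/2. Then det(X_α(v), X_β^λ(v)) ≠ 0 for every v ∈ ℝ² with v ≠ (0,0) if and only if t < ψ(α,β). -/

import Mathlib

noncomputable def psi (α β : ℝ) : ℝ :=
  (-(α * β) + |α * β| * Real.sqrt ((α ^ 2 + 1) * (β ^ 2 + 1))) / (α ^ 2 * β ^ 2)

/-- `det2 v w = v₁w₂ − v₂w₁`. -/
def det2 (v w : ℝ × ℝ) : ℝ := v.1 * w.2 - v.2 * w.1

/-- The logarithmic vector field `X_α(x,y) = (x − αy, αx + y)`. -/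
def Xlog (α : ℝ) (v : ℝ × ℝ) : ℝ × ℝ := (v.1 - α * v.2, α * v.1 + v.2)

/-- The pushforward of `X_β` by `B_λ = diag(1,λ)`. -/
noncomputable def XlogLam (β l : ℝ) (v : ℝ × ℝ) : ℝ × ℝ :=
  (v.1 - (β / l) * v.2, l * β * v.1 + v.2)

lemma quad_iff (A B C : ℝ) :
    (∀ v : ℝ × ℝ, v ≠ 0 → A * v.1 ^ 2 + B * v.1 * v.2 + C * v.2 ^ 2 ≠ 0) ↔
      B ^ 2 - 4 * A * C < 0 := by
  constructor
  · intro h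
    have hA : A ≠ 0 := by
      have := h (1, 0) (by norm_num [Prod.ext_iff])
      simpa using this
    by_contra hd
    push_neg at hd
    set x := (-B + Real.sqrt (B ^ 2 - 4 * A * C)) / (2 * A) with hx
    have hs : Real.sqrt (B ^ 2 - 4 * A * C) ^ 2 = B ^ 2 - 4 * A * C :=
      Real.sq_sqrt hd
    have h2 : 2 * A * x + B = Real.sqrt (B ^ 2 - 4 * A * C) := by
      rw [hx]; field_simp; ring
    have h3 := h (x, 1) (by norm_num [Prod.ext_iff])
    apply h3
    have h4 : 4 * A * (A * x ^ 2 + B * x * 1 + C * 1 ^ 2) = 0 := by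
      have he : 4 * A * (A * x ^ 2 + B * x * 1 + C * 1 ^ 2)
          = (2 * A * x + B) ^ 2 - (B ^ 2 - 4 * A * C) := by ring
      rw [he, h2, hs]; ring
    have h5 : (4 : ℝ) * A ≠ 0 := by simp [hA]
    simpa using (mul_eq_zero.mp h4).resolve_left h5
  · intro hd v hv
    have hAC : 0 < A * C := by nlinarith [sq_nonneg B]
    have hA : A ≠ 0 := by
      intro h; rw [h] at hAC; simp at hAC
    have hv' : v.1 ≠ 0 ∨ v.2 ≠ 0 := by
      by_contra h
      push_neg at h
      exact hv (Prod.ext h.1 h.2)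
    intro h0
    by_cases hy : v.2 = 0
    · rw [hy] at h0
      have hx1 : v.1 ≠ 0 := hv'.resolve_right (by simp [hy])
      have : A * v.1 ^ 2 ≠ 0 := by positivity
      apply this; linarith [h0]
    · have hy2 : 0 < v.2 ^ 2 := by positivity
      have key : (2 * A * v.1 + B * v.2) ^ 2 + (4 * A * C - B ^ 2) * v.2 ^ 2
          = 4 * A * (A * v.1 ^ 2 + B * v.1 * v.2 + C * v.2 ^ 2) := by ring
      rw [h0] at key
      nlinarith [sq_nonneg (2 * A * v.1 + B * v.2),
        mul_pos (show (0:ℝ) < 4 * A * C - B ^ 2 by linarith) hy2]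

theorem transverse_iff_t_lt_psi (α β l : ℝ) (hα : α ≠ 0) (hβ : β ≠ 0)
    (hαβ : α ≠ β) (hl : 1 ≤ l) :
    (∀ v : ℝ × ℝ, v ≠ 0 → det2 (Xlog α v) (XlogLam β l v) ≠ 0) ↔
      (l + 1 / l) / 2 < psi α β := by
  have hl0 : (0:ℝ) < l := by linarith
  have hl' : l ≠ 0 := ne_of_gt hl0
  set t : ℝ := (l + 1 / l) / 2 with ht
  have ht1 : 1 ≤ t := by
    rw [ht, le_div_iff₀ (by norm_num : (0:ℝ) < 2), ← sub_nonneg]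
    have he : l + 1 / l - 1 * 2 = (l - 1) ^ 2 / l := by field_simp; ring
    rw [he]; positivity
  set A : ℝ := l * β - α with hA
  set B : ℝ := α * β * (1 / l - l) with hB
  set C : ℝ := β / l - α with hC
  have hdet : ∀ v : ℝ × ℝ, det2 (Xlog α v) (XlogLam β l v)
      = A * v.1 ^ 2 + B * v.1 * v.2 + C * v.2 ^ 2 := by
    intro v
    simp only [det2, Xlog, XlogLam, hA, hB, hC]
    field_simp
    ring
  have step1 : (∀ v : ℝ × ℝ, v ≠ 0 → det2 (Xlog α v) (XlogLam β l v) ≠ 0)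
      ↔ B ^ 2 - 4 * A * C < 0 := by
    rw [← quad_iff A B C]
    exact forall_congr' fun v => by rw [hdet v]
  rw [step1]
  -- now the algebra
  set D : ℝ := Real.sqrt ((α ^ 2 + 1) * (β ^ 2 + 1)) with hD
  have hD2 : D ^ 2 = (α ^ 2 + 1) * (β ^ 2 + 1) := Real.sq_sqrt (by positivity)
  have hD0 : 0 ≤ D := Real.sqrt_nonneg _
  have hD1 : 1 ≤ D := by nlinarith [sq_nonneg α, sq_nonneg β, sq_nonneg (α*β)]
  set q : ℝ := |α * β| with hq
  have hq2 : q ^ 2 = (α * β) ^ 2 := sq_abs _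
  have hq0 : 0 ≤ q := abs_nonneg _
  have hqp : -(α * β) ≤ q := neg_le_abs _
  have hp2 : (0:ℝ) < (α * β) ^ 2 := by positivity
  have hpsi : psi α β = (-(α * β) + q * D) / (α * β) ^ 2 := by
    rw [psi, ← hD, ← hq]; ring_nf
  have hdisc : B ^ 2 - 4 * A * C
      = 4 * ((α * β) ^ 2 * t ^ 2 + 2 * (α * β) * t - ((α * β) ^ 2 + α ^ 2 + β ^ 2)) := by
    rw [hB, hA, hC, ht]
    field_simp
    ring
  have hfac : (α * β) ^ 2 * ((α * β) ^ 2 * t ^ 2 + 2 * (α * β) * t - ((α * β) ^ 2 + α ^ 2 + β ^ 2))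
      = ((α * β) ^ 2 * t + α * β - q * D) * ((α * β) ^ 2 * t + α * β + q * D) := by
    linear_combination D ^ 2 * hq2 + (α * β) ^ 2 * hD2
  have hS : 0 < (α * β) ^ 2 * t + α * β + q * D := by
    nlinarith [mul_le_mul_of_nonneg_left hD1 hq0, mul_le_mul_of_nonneg_left ht1 hp2.le]
  rw [hdisc, hpsi, lt_div_iff₀ hp2]
  constructor
  · intro h
    have hG' : (α * β) ^ 2 * t ^ 2 + 2 * (α * β) * t - ((α * β) ^ 2 + α ^ 2 + β ^ 2) < 0 := by
      linarith
    have hG := mul_neg_of_pos_of_neg hp2 hG'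
    rw [hfac] at hG
    have hneg : (α * β) ^ 2 * t + α * β - q * D < 0 := by
      by_contra hc
      push_neg at hc
      exact absurd hG (not_lt.mpr (mul_nonneg hc hS.le))
    linarith
  · intro h
    have hneg : (α * β) ^ 2 * t + α * β - q * D < 0 := by linarith
    have hG := mul_neg_of_neg_of_pos hneg hS
    rw [← hfac] at hG
    have hG2 : (α * β) ^ 2 * t ^ 2 + 2 * (α * β) * t - ((α * β) ^ 2 + α ^ 2 + β ^ 2) < 0 := by
      by_contra hc
      push_neg at hc
      exact absurd hG (not_lt.mpr (mul_nonneg hp2.le hc))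
    linarith
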